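/- Let n ≥ 2 and let f ∈ K[x₁,…,xₙ] be a nonzero polynomial. Let X_j = (P_{j1},…,P_{jn}) ∈ V_f⁰ for j = 1,…,n−1, let M be the n×(n−1) matrix with entries M_{m,j} = P_{jm}, and let M_j denote the (n−1)×(n−1) minor of M obtained by deleting the j-th row. Assume: (1) there is an ideal I of K[x₁,…,xₙ] whose quotient ring K[x₁,…,xₙ]/I has Krull dimension at most n−2 such that for every point p ∈ Kⁿ outside the zero set of I, the scalar matrix M(p) has rank n−1; (2) every common divisor of M₁,…,Mₙ in K[x₁,…,xₙ] is a nonzero constant; (3) f = ∑_{m=1}^n Q_m f_{x_m} for some Q₁,…,Qₙ ∈ K[x₁,…,xₙ]. Then the K[x₁,…,xₙ]-module V_f is freely generated by X₁,…,X_{n−1} together with X_* = (Q₁,…,Qₙ). -/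

import Mathlib

open MvPolynomial

/-- The `K[x₁,…,xₙ]`-submodule `V_f` of `K[x₁,…,xₙ]ⁿ` consisting of the
polynomial vector fields `∑ Pⱼ ∂/∂xⱼ` leaving the hypersurface `f = 0`
invariant, i.e. `∑ Pⱼ f_{xⱼ} = k f` for some cofactor `k`. -/
noncomputable def Vf {K : Type*} [Field K] {n : ℕ} (f : MvPolynomial (Fin n) K) :
    Submodule (MvPolynomial (Fin n) K) (Fin n → MvPolynomial (Fin n) K) where
  carrier := {P | ∃ k : MvPolynomial (Fin n) K, ∑ j, P j * pderiv j f = k * f}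
  add_mem' := by
    rintro P Q ⟨k, hk⟩ ⟨l, hl⟩
    refine ⟨k + l, ?_⟩
    simp only [Pi.add_apply, add_mul, Finset.sum_add_distrib, hk, hl]
  zero_mem' := ⟨0, by simp⟩
  smul_mem' := by
    rintro c P ⟨k, hk⟩
    refine ⟨c * k, ?_⟩
    simp only [Pi.smul_apply, smul_eq_mul, mul_assoc, ← Finset.mul_sum, hk]
/-- The submodule `V_f⁰ ⊆ V_f` of vector fields with zero cofactor:
`∑ Pⱼ f_{xⱼ} = 0`. -/
noncomputable def Vf0 {K : Type*} [Field K] {n : ℕ} (f : MvPolynomial (Fin n) K) :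
    Submodule (MvPolynomial (Fin n) K) (Fin n → MvPolynomial (Fin n) K) where
  carrier := {P | ∑ j, P j * pderiv j f = 0}
  add_mem' := by
    intro P Q hP hQ
    simp only [Set.mem_setOf_eq, Pi.add_apply, add_mul,
      Finset.sum_add_distrib] at *
    rw [hP, hQ, add_zero]
  zero_mem' := by simp
  smul_mem' := by
    intro c P hP
    simp only [Set.mem_setOf_eq, Pi.smul_apply, smul_eq_mul, mul_assoc,
      ← Finset.mul_sum] at *
    rw [hP, mul_zero]

/-- The increasing embedding `Fin (n-1) → Fin n` skipping `j`: used to delete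
the `j`-th row of a matrix. -/
def deleteRow {n : ℕ} (j : Fin n) (a : Fin (n - 1)) : Fin n :=
  if h : (a : ℕ) < (j : ℕ) then
    ⟨a, by have := j.isLt; omega⟩
  else
    ⟨a + 1, by have := a.isLt; omega⟩

section Aux

variable {K : Type*} [Field K] {n : ℕ}

private lemma exists_det_ne_zero
    (X : Fin (n - 1) → Fin n → MvPolynomial (Fin n) K)
    (h2 : ∀ e : MvPolynomial (Fin n) K,
      (∀ j : Fin n,
        e ∣ (Matrix.of fun a b : Fin (n - 1) => X b (deleteRow j a)).det) →
      ∃ c : K, c ≠ 0 ∧ e = C c) :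
    ∃ i : Fin n,
      (Matrix.of fun a b : Fin (n - 1) => X b (deleteRow i a)).det ≠ 0 := by
  by_contra h
  push_neg at h
  obtain ⟨c, hc, h0⟩ := h2 0 (fun j => by simp [h j])
  exact hc (by simpa using h0.symm)

end Aux

section Aux2

variable {K : Type*} [Field K] {n : ℕ}

private lemma sum_grad (g : Fin n → MvPolynomial (Fin n) K)
    (d : Fin (n - 1) → MvPolynomial (Fin n) K)
    (X : Fin (n - 1) → Fin n → MvPolynomial (Fin n) K)
    (hX : ∀ j, ∑ m, X j m * g m = 0) :
    ∑ m, (∑ j, d j * X j m) * g m = 0 := by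
  calc ∑ m, (∑ j, d j * X j m) * g m
      = ∑ m, ∑ j, d j * (X j m * g m) := by
        refine Finset.sum_congr rfl fun m _ => ?_
        rw [Finset.sum_mul]
        exact Finset.sum_congr rfl fun j _ => by ring
    _ = ∑ j, ∑ m, d j * (X j m * g m) := Finset.sum_comm
    _ = ∑ j, d j * ∑ m, X j m * g m := by
        refine Finset.sum_congr rfl fun j _ => (Finset.mul_sum _ _ _).symm
    _ = 0 := by simp [hX]

private lemma coeffs_zero
    (f : MvPolynomial (Fin n) K) (hf : f ≠ 0)
    (X : Fin (n - 1) → Fin n → MvPolynomial (Fin n) K)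
    (hX : ∀ j, ∑ m, X j m * pderiv m f = 0)
    (h2 : ∀ e : MvPolynomial (Fin n) K,
      (∀ j : Fin n,
        e ∣ (Matrix.of fun a b : Fin (n - 1) => X b (deleteRow j a)).det) →
      ∃ c : K, c ≠ 0 ∧ e = C c)
    (Q : Fin n → MvPolynomial (Fin n) K)
    (h3 : f = ∑ m, Q m * pderiv m f)
    (d : Fin (n - 1) → MvPolynomial (Fin n) K) (e : MvPolynomial (Fin n) K)
    (h : (∑ j, d j • X j) + e • Q = 0) :
    d = 0 ∧ e = 0 := by
  classical
  have hm : ∀ m, (∑ j, d j * X j m) + e * Q m = 0 := by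
    intro m
    have := congrFun h m
    simpa [Finset.sum_apply] using this
  have he : e = 0 := by
    have hsum : ∑ m, ((∑ j, d j * X j m) + e * Q m) * pderiv m f = 0 := by
      simp [hm]
    have hexp : ∑ m, ((∑ j, d j * X j m) + e * Q m) * pderiv m f
        = e * f := by
      rw [Finset.sum_congr rfl
        (fun m _ => add_mul (∑ j, d j * X j m) (e * Q m) (pderiv m f)),
        Finset.sum_add_distrib, sum_grad _ d X hX, zero_add]
      calc ∑ m, e * Q m * pderiv m f
          = e * ∑ m, Q m * pderiv m f := by
            rw [Finset.mul_sum]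
            exact Finset.sum_congr rfl fun m _ => by ring
        _ = e * f := by rw [← h3]
    have : e * f = 0 := by rw [← hexp, hsum]
    rcases mul_eq_zero.mp this with h' | h'
    · exact h'
    · exact absurd h' hf
  subst he
  have hXd : ∀ m, ∑ j, d j * X j m = 0 := by
    intro m; have := hm m; simpa using this
  obtain ⟨i₀, hi₀⟩ := exists_det_ne_zero X h2
  set A : Matrix (Fin (n - 1)) (Fin (n - 1)) (MvPolynomial (Fin n) K) :=
    Matrix.of fun a b : Fin (n - 1) => X b (deleteRow i₀ a) with hA
  have hAv : A.mulVec d = 0 := by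
    funext a
    have := hXd (deleteRow i₀ a)
    simpa [Matrix.mulVec, dotProduct, hA, mul_comm] using this
  have hdet : A.det • d = 0 := by
    calc A.det • d = (A.det • (1 : Matrix (Fin (n-1)) (Fin (n-1)) _)).mulVec d := by
          rw [Matrix.smul_mulVec, Matrix.one_mulVec]
      _ = (A.adjugate * A).mulVec d := by rw [Matrix.adjugate_mul]
      _ = A.adjugate.mulVec (A.mulVec d) := (Matrix.mulVec_mulVec d A.adjugate A).symm
      _ = 0 := by rw [hAv, Matrix.mulVec_zero]
  refine ⟨funext fun j => ?_, rfl⟩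
  have := congrFun hdet j
  simp only [Pi.smul_apply, smul_eq_mul, Pi.zero_apply] at this
  rcases mul_eq_zero.mp this with h' | h'
  · exact absurd h' hi₀
  · exact h'

end Aux2

section Aux3

variable {K : Type*} [Field K] {n : ℕ}

set_option maxHeartbeats 2000000 in
private lemma exists_coeffs (hn : 2 ≤ n)
    (f : MvPolynomial (Fin n) K)
    (hg : ∃ m, pderiv m f ≠ 0)
    (X : Fin (n - 1) → Fin n → MvPolynomial (Fin n) K)
    (hX : ∀ j, ∑ m, X j m * pderiv m f = 0)
    (h2 : ∀ e : MvPolynomial (Fin n) K,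
      (∀ j : Fin n,
        e ∣ (Matrix.of fun a b : Fin (n - 1) => X b (deleteRow j a)).det) →
      ∃ c : K, c ≠ 0 ∧ e = C c)
    (Y : Fin n → MvPolynomial (Fin n) K)
    (hY : ∑ m, Y m * pderiv m f = 0) :
    ∃ c : Fin (n - 1) → MvPolynomial (Fin n) K,
      ∀ m, Y m = ∑ j, c j * X j m := by
  classical
  obtain ⟨i₀, hi₀⟩ := exists_det_ne_zero X h2
  let F := FractionRing (MvPolynomial (Fin n) K)
  let φ : MvPolynomial (Fin n) K →+* F := algebraMap (MvPolynomial (Fin n) K) F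
  have hφ : Function.Injective φ := IsFractionRing.injective (MvPolynomial (Fin n) K) F
  set A : Fin n → Matrix (Fin (n - 1)) (Fin (n - 1)) (MvPolynomial (Fin n) K) :=
    fun i => Matrix.of fun a b : Fin (n - 1) => X b (deleteRow i a) with hAdef
  set Xc : Fin (n - 1) → (Fin n → F) := fun j m => φ (X j m) with hXcdef
  set Yc : Fin n → F := fun m => φ (Y m) with hYcdef
  set G : (Fin n → F) →ₗ[F] F :=
    ∑ m : Fin n, φ (pderiv m f) • LinearMap.proj m with hGdef
  have hGapply : ∀ v : Fin n → F, G v = ∑ m, φ (pderiv m f) * v m := by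
    intro v
    simp [hGdef, LinearMap.sum_apply, LinearMap.smul_apply, smul_eq_mul]
  have hker : ∀ j, Xc j ∈ LinearMap.ker G := by
    intro j
    rw [LinearMap.mem_ker, hGapply]
    have : ∀ m : Fin n, φ (pderiv m f) * Xc j m = φ (X j m * pderiv m f) := by
      intro m
      rw [← map_mul]
      congr 1
      ring
    rw [Finset.sum_congr rfl fun m _ => this m, ← map_sum, hX j, map_zero]
  have hYker : Yc ∈ LinearMap.ker G := by
    rw [LinearMap.mem_ker, hGapply]
    have : ∀ m : Fin n, φ (pderiv m f) * Yc m = φ (Y m * pderiv m f) := by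
      intro m
      rw [← map_mul]
      congr 1
      ring
    rw [Finset.sum_congr rfl fun m _ => this m, ← map_sum, hY, map_zero]
  set B : Matrix (Fin (n - 1)) (Fin (n - 1)) F := (A i₀).map φ with hBdef
  have hBdet : B.det ≠ 0 := by
    have : B.det = φ ((A i₀).det) := by
      rw [hBdef, show (A i₀).map φ = φ.mapMatrix (A i₀) from rfl, ← RingHom.map_det]
    rw [this]
    intro h
    exact hi₀ (hφ (by rw [h, map_zero]))
  have hBunit : IsUnit B := (Matrix.isUnit_iff_isUnit_det B).mpr
    (isUnit_iff_ne_zero.mpr hBdet)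
  have hli : LinearIndependent F Xc := by
    have h1 : LinearIndependent F (fun b => B.transpose b) :=
      Matrix.linearIndependent_cols_iff_isUnit.mpr hBunit
    have h2' : (fun b => B.transpose b)
        = (LinearMap.funLeft F F (deleteRow i₀)) ∘ Xc := by
      funext b a
      rfl
    rw [h2'] at h1
    exact LinearIndependent.of_comp (LinearMap.funLeft F F (deleteRow i₀)) h1
  have hGne : G ≠ 0 := by
    obtain ⟨m₀, hm₀⟩ := hg
    intro h
    have h1 := hGapply (Pi.single m₀ 1)
    rw [h] at h1
    simp only [LinearMap.zero_apply] at h1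
    have h2'' : ∑ m, φ (pderiv m f) * (Pi.single m₀ (1:F) : Fin n → F) m = φ (pderiv m₀ f) := by
      rw [Finset.sum_eq_single m₀]
      · simp
      · intro b _ hb
        simp [Pi.single_eq_of_ne hb]
      · simp
    rw [h2''] at h1
    exact hm₀ (hφ (by rw [← h1, map_zero]))
  have hfr : Module.finrank F (LinearMap.ker G) ≤ n - 1 := by
    have hlt : LinearMap.ker G < ⊤ :=
      lt_top_iff_ne_top.mpr (by rw [Ne, LinearMap.ker_eq_top]; exact hGne)
    have h4 := Submodule.finrank_lt (K := F) (V := Fin n → F) hlt.ne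
    rw [Module.finrank_pi, Fintype.card_fin] at h4
    omega
  have hspan : Submodule.span F (Set.range Xc) = LinearMap.ker G := by
    apply Submodule.eq_of_le_of_finrank_le
    · rw [Submodule.span_le]
      rintro v ⟨j, rfl⟩
      exact hker j
    · rw [finrank_span_eq_card hli, Fintype.card_fin]
      exact hfr
  have hYmem : Yc ∈ Submodule.span F (Set.range Xc) := by
    rw [hspan]; exact hYker
  obtain ⟨c, hc⟩ := (Submodule.mem_span_range_iff_exists_fun F).mp hYmem
  have hsol : ∀ m, ∑ j, c j * φ (X j m) = φ (Y m) := by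
    intro m
    have h5 := congrFun hc m
    simpa [Finset.sum_apply, smul_eq_mul] using h5
  have hint : ∀ j, ∃ r : MvPolynomial (Fin n) K, φ r = c j := by
    intro j
    set a : MvPolynomial (Fin n) K := IsFractionRing.num (MvPolynomial (Fin n) K) (c j) with hadef
    set b := IsFractionRing.den (MvPolynomial (Fin n) K) (c j) with hbdef
    have h1 : IsLocalization.mk' F a b = c j :=
      IsFractionRing.mk'_num_den (MvPolynomial (Fin n) K) (c j)
    have hspec : c j * φ (b : MvPolynomial (Fin n) K) = φ a := by
      rw [← h1]
      exact IsLocalization.mk'_spec F a b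
    have hcop : IsRelPrime a (b : MvPolynomial (Fin n) K) :=
      IsFractionRing.num_den_reduced (MvPolynomial (Fin n) K) (c j)
    have hdvd : ∀ i : Fin n, (b : MvPolynomial (Fin n) K) ∣ (A i).det := by
      intro i
      have hmv : ((A i).map φ).mulVec c = fun a' => φ (Y (deleteRow i a')) := by
        funext a'
        have h6 := hsol (deleteRow i a')
        simp only [Matrix.mulVec, dotProduct, Matrix.map_apply, hAdef,
          Matrix.of_apply]
        rw [← h6]
        exact Finset.sum_congr rfl fun j' _ => mul_comm _ _
      have hcr : φ ((A i).det) • c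
          = ((A i).map φ).adjugate.mulVec (fun a' => φ (Y (deleteRow i a'))) := by
        have hdetmap : φ ((A i).det) = ((A i).map φ).det := by
          rw [show (A i).map φ = φ.mapMatrix (A i) from rfl, ← RingHom.map_det]
        rw [← hmv, Matrix.mulVec_mulVec, Matrix.adjugate_mul, hdetmap,
          Matrix.smul_mulVec, Matrix.one_mulVec]
      have hcomp := congrFun hcr j
      simp only [Pi.smul_apply, smul_eq_mul] at hcomp
      set E : MvPolynomial (Fin n) K := ∑ a', (A i).adjugate j a' * Y (deleteRow i a') with hEdef
      have hE : φ ((A i).det) * c j = φ E := by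
        rw [hcomp, hEdef, map_sum]
        have hadj : ((A i).map φ).adjugate = ((A i).adjugate).map φ := by
          rw [show (A i).map φ = φ.mapMatrix (A i) from rfl,
            show ((A i).adjugate).map φ = φ.mapMatrix ((A i).adjugate) from rfl,
            RingHom.map_adjugate]
        simp only [Matrix.mulVec, dotProduct, hadj, Matrix.map_apply, map_mul]
      have heq : (A i).det * a = E * (b : MvPolynomial (Fin n) K) := by
        apply hφ
        rw [map_mul, map_mul, ← hspec, ← hE]
        ring
      exact hcop.symm.dvd_of_dvd_mul_right ⟨E, by rw [heq, mul_comm]⟩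
    obtain ⟨c₀, hc₀, hbC⟩ := h2 (b : MvPolynomial (Fin n) K) hdvd
    refine ⟨C c₀⁻¹ * a, ?_⟩
    calc φ (C c₀⁻¹ * a) = φ (C c₀⁻¹) * φ a := map_mul φ _ _
      _ = φ (C c₀⁻¹) * (c j * φ (b : MvPolynomial (Fin n) K)) := by rw [hspec]
      _ = c j * (φ (C c₀⁻¹) * φ (b : MvPolynomial (Fin n) K)) := by ring
      _ = c j * φ (C c₀⁻¹ * (b : MvPolynomial (Fin n) K)) := by rw [map_mul]
      _ = c j * φ (C (c₀⁻¹ * c₀)) := by rw [hbC, ← C_mul]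
      _ = c j := by rw [inv_mul_cancel₀ hc₀]; simp
  choose cr hcr using hint
  refine ⟨cr, fun m => hφ ?_⟩
  calc φ (Y m) = ∑ j, c j * φ (X j m) := (hsol m).symm
    _ = ∑ j, φ (cr j * X j m) := by
        refine Finset.sum_congr rfl fun j _ => ?_
        rw [map_mul, hcr]
    _ = φ (∑ j, cr j * X j m) := (map_sum φ _ _).symm

end Aux3

/-- Let `n ≥ 2`, `f ∈ K[x₁,…,xₙ]` nonzero, and
`X₁,…,X_{n-1} ∈ V_f⁰` with coefficient matrix `M` (`M_{m,j} = P_{jm}`) and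
minors `M_j` (delete the `j`-th row). Assume (1) there is an ideal `I` with
`dim K[x]/I ≤ n-2` such that `M(p)` has rank `n-1` at every `p ∈ Kⁿ` outside
the zero set of `I`; (2) every common divisor of `M₁,…,Mₙ` is a nonzero
constant; (3) `f = ∑ Q_m f_{x_m}`. Then `V_f` is freely generated by
`X₁,…,X_{n-1}` together with `X_* = (Q₁,…,Qₙ)`. -/
theorem stmt9 (K : Type*) [Field K] [Algebra K ℂ]
    (n : ℕ) (hn : 2 ≤ n)
    (f : MvPolynomial (Fin n) K) (hf : f ≠ 0)
    (X : Fin (n - 1) → Fin n → MvPolynomial (Fin n) K)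
    (hX : ∀ j, X j ∈ Vf0 f)
    (h1 : ∃ I : Ideal (MvPolynomial (Fin n) K),
      ringKrullDim (MvPolynomial (Fin n) K ⧸ I) ≤ (n - 2 : ℕ) ∧
      ∀ p : Fin n → K, (∃ g ∈ I, eval p g ≠ 0) →
        (Matrix.of fun (m : Fin n) (j : Fin (n - 1)) => eval p (X j m)).rank = n - 1)
    (h2 : ∀ e : MvPolynomial (Fin n) K,
      (∀ j : Fin n,
        e ∣ (Matrix.of fun a b : Fin (n - 1) => X b (deleteRow j a)).det) →
      ∃ c : K, c ≠ 0 ∧ e = C c)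
    (Q : Fin n → MvPolynomial (Fin n) K)
    (h3 : f = ∑ m, Q m * pderiv m f) :
    ∀ P ∈ Vf f,
      ∃! c : (Fin (n - 1) → MvPolynomial (Fin n) K) × MvPolynomial (Fin n) K,
        P = (∑ j, c.1 j • X j) + c.2 • Q := by
  intro P hP
  classical
  obtain ⟨k, hk⟩ := hP
  have hg : ∃ m, pderiv m f ≠ 0 := by
    by_contra h
    push_neg at h
    apply hf
    rw [h3]
    simp [h]
  have hX' : ∀ j, ∑ m, X j m * pderiv m f = 0 := fun j => hX j
  have hY : ∑ m, (P m - k * Q m) * pderiv m f = 0 := by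
    have hsplit : ∑ m, (P m - k * Q m) * pderiv m f
        = (∑ m, P m * pderiv m f) - k * ∑ m, Q m * pderiv m f := by
      rw [Finset.mul_sum, ← Finset.sum_sub_distrib]
      exact Finset.sum_congr rfl fun m _ => by ring
    rw [hsplit, hk, ← h3, sub_self]
  obtain ⟨c, hc⟩ := exists_coeffs hn f hg X hX' h2 (fun m => P m - k * Q m) hY
  refine ⟨(c, k), ?_, ?_⟩
  · funext m
    have hcm := hc m
    simp only [Pi.add_apply, Finset.sum_apply, Pi.smul_apply, smul_eq_mul] at *
    linear_combination hcm
  · rintro ⟨d, e⟩ hde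
    have hzero : (∑ j, (fun j' => d j' - c j') j • X j) + (e - k) • Q = 0 := by
      funext m
      have h1m := congrFun hde m
      have h2m := hc m
      simp only [Pi.add_apply, Finset.sum_apply, Pi.smul_apply, smul_eq_mul,
        Pi.zero_apply] at *
      rw [Finset.sum_congr rfl (fun j _ => sub_mul (d j) (c j) (X j m)),
        Finset.sum_sub_distrib]
      linear_combination h2m - h1m
    obtain ⟨hd0, he0⟩ := coeffs_zero f hf X hX' h2 Q h3 _ _ hzero
    have hdc : ∀ j', d j' = c j' := fun j' => by
      have := congrFun hd0 j'
      simpa [sub_eq_zero] using this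
    have hek : e = k := by rwa [sub_eq_zero] at he0
    simp only [Prod.mk.injEq]
    exact ⟨funext hdc, hek⟩
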